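/- For γ ∈ ℕ and z ∈ (0,1), let L_γ(z) = ∑_{r=1}^∞ r^γ z^r, and define D_γ(p) = ((1−p)/4)·[ (p(p+3)/(p+1))·L_γ(p²) + (p²/(p+1)² − 2)·L_γ(p) ] + ((1−p)²/4)·[ (L_{γ+1}(p) + L_γ(p))/(1+p) + L_{γ+1}(p²) + L_γ(p²) ] for p ∈ (0,1). Then, as p → 1 from below, (1−p)^γ · D_γ(p) tends to (γ!/16)·( (5+γ)/2^γ + 2γ − 5 ). -/

import Mathlib

/-- The polylogarithm-type series `L_γ(z) = ∑_{r=1}^∞ r^γ z^r`. -/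
noncomputable def polyL (γ : ℕ) (z : ℝ) : ℝ := ∑' r : ℕ, ((r : ℝ) + 1) ^ γ * z ^ (r + 1)



lemma polyL_summable (γ : ℕ) {z : ℝ} (hz : |z| < 1) :
    Summable (fun r : ℕ => ((r : ℝ) + 1) ^ γ * z ^ (r + 1)) := by
  have h := summable_pow_mul_geometric_of_norm_lt_one (R := ℝ) γ (r := z) (by simpa using hz)
  have h2 := h.comp_injective Nat.succ_injective
  convert h2 using 1
  · rfl
  funext r
  simp only [Function.comp, Nat.succ_eq_add_one]
  push_cast; ring

lemma polyL_rec (γ : ℕ) {z : ℝ} (hz : |z| < 1) :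
    (1 - z) * polyL γ z = z + z * ∑ j ∈ Finset.range γ, (Nat.choose γ j : ℝ) * polyL j z := by
  have S : ∀ k : ℕ, Summable (fun r : ℕ => ((r : ℝ) + 1) ^ k * z ^ (r + 1)) :=
    fun k => polyL_summable k hz
  have Sshift : Summable (fun r : ℕ => ((r : ℝ) + 2) ^ γ * z ^ (r + 2)) := by
    have := (S γ).comp_injective Nat.succ_injective
    convert this using 1
    · rfl
    funext r
    simp only [Function.comp, Nat.succ_eq_add_one]
    push_cast; ring
  have Sz : Summable (fun r : ℕ => ((r : ℝ) + 1) ^ γ * z ^ (r + 2)) := by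
    have := (S γ).mul_left z
    convert this using 1; exact rfl; funext r; ring
  -- polyL γ z = z + shifted sum
  have h1 : polyL γ z = z + ∑' r : ℕ, ((r : ℝ) + 2) ^ γ * z ^ (r + 2) := by
    rw [polyL, (S γ).tsum_eq_zero_add]
    norm_num
    congr 1
    · funext r; ring_nf
  -- z * polyL γ z
  have h2 : z * polyL γ z = ∑' r : ℕ, ((r : ℝ) + 1) ^ γ * z ^ (r + 2) := by
    rw [polyL, ← tsum_mul_left]
    congr 1; funext r; ring
  have h3 : (1 - z) * polyL γ z
      = z + ∑' r : ℕ, (((r : ℝ) + 2) ^ γ - ((r : ℝ) + 1) ^ γ) * z ^ (r + 2) := by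
    have : (1 - z) * polyL γ z = polyL γ z - z * polyL γ z := by ring
    rw [this, h2, h1, add_sub_assoc, ← Sshift.tsum_sub Sz]
    congr 1
    exact tsum_congr fun r => by ring
  rw [h3]
  congr 1
  -- binomial expansion
  have hbin : ∀ r : ℕ, (((r : ℝ) + 2) ^ γ - ((r : ℝ) + 1) ^ γ)
      = ∑ j ∈ Finset.range γ, (Nat.choose γ j : ℝ) * ((r : ℝ) + 1) ^ j := by
    intro r
    have := add_pow ((r : ℝ) + 1) 1 γ
    rw [Finset.sum_range_succ] at this
    simp at this
    have h2 : ((r : ℝ) + 2) ^ γ = ((r : ℝ) + 1 + 1) ^ γ := by ring_nf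
    rw [h2, this, add_sub_cancel_right]
    exact Finset.sum_congr rfl fun j _ => by ring
  have hsum : ∀ j ∈ Finset.range γ, Summable
      (fun r : ℕ => (Nat.choose γ j : ℝ) * ((r : ℝ) + 1) ^ j * z ^ (r + 2)) := by
    intro j _
    have := (S j).mul_left ((Nat.choose γ j : ℝ) * z)
    convert this using 1; exact rfl; funext r; ring
  calc ∑' r : ℕ, (((r : ℝ) + 2) ^ γ - ((r : ℝ) + 1) ^ γ) * z ^ (r + 2)
      = ∑' r : ℕ, ∑ j ∈ Finset.range γ, (Nat.choose γ j : ℝ) * ((r : ℝ) + 1) ^ j * z ^ (r + 2) := by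
        congr 1; funext r; rw [hbin r, Finset.sum_mul]
    _ = ∑ j ∈ Finset.range γ, ∑' r : ℕ, (Nat.choose γ j : ℝ) * ((r : ℝ) + 1) ^ j * z ^ (r + 2) := by
        rw [Summable.tsum_finsetSum hsum]
    _ = z * ∑ j ∈ Finset.range γ, (Nat.choose γ j : ℝ) * polyL j z := by
        rw [Finset.mul_sum]
        refine Finset.sum_congr rfl (fun j _ => ?_)
        rw [polyL, ← tsum_mul_left, ← tsum_mul_left]
        exact tsum_congr fun r => by ring

lemma polyL_tendsto (γ : ℕ) : Filter.Tendsto (fun z : ℝ => (1 - z) ^ (γ + 1) * polyL γ z)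
    (nhdsWithin 1 (Set.Ioo 0 1)) (nhds (Nat.factorial γ : ℝ)) := by
  induction γ using Nat.strong_induction_on with
  | _ γ IH =>
  have hz1 : Filter.Tendsto (fun z : ℝ => z) (nhdsWithin 1 (Set.Ioo (0:ℝ) 1)) (nhds 1) :=
    Filter.tendsto_id.mono_left nhdsWithin_le_nhds
  have hz0 : Filter.Tendsto (fun z : ℝ => 1 - z) (nhdsWithin 1 (Set.Ioo (0:ℝ) 1)) (nhds 0) := by
    have := tendsto_const_nhds (α := ℝ) (x := (1:ℝ)) (f := nhdsWithin 1 (Set.Ioo (0:ℝ) 1))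
    simpa using this.sub hz1
  have hmain : Filter.Tendsto (fun z : ℝ => z * (1-z)^γ + ∑ j ∈ Finset.range γ,
      (Nat.choose γ j : ℝ) * z * (1-z)^(γ-1-j) * ((1-z)^(j+1) * polyL j z))
      (nhdsWithin 1 (Set.Ioo 0 1))
      (nhds (1 * (0:ℝ)^γ + ∑ j ∈ Finset.range γ,
        (Nat.choose γ j : ℝ) * 1 * (0:ℝ)^(γ-1-j) * (Nat.factorial j : ℝ))) := by
    apply Filter.Tendsto.add
    · exact hz1.mul (hz0.pow γ)
    · apply tendsto_finset_sum
      intro j hj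
      exact ((tendsto_const_nhds.mul hz1).mul (hz0.pow _)).mul (IH j (Finset.mem_range.mp hj))
  have heq : (fun z : ℝ => z * (1-z)^γ + ∑ j ∈ Finset.range γ,
      (Nat.choose γ j : ℝ) * z * (1-z)^(γ-1-j) * ((1-z)^(j+1) * polyL j z))
      =ᶠ[nhdsWithin 1 (Set.Ioo (0:ℝ) 1)] (fun z : ℝ => (1 - z) ^ (γ + 1) * polyL γ z) := by
    filter_upwards [self_mem_nhdsWithin] with z hz
    have hzabs : |z| < 1 := by
      rw [abs_lt]; exact ⟨by linarith [hz.1], hz.2⟩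
    have hrec := polyL_rec γ hzabs
    have hsplit : (1-z)^(γ+1) * polyL γ z = (1-z)^γ * ((1-z) * polyL γ z) := by ring
    rw [hsplit, hrec, mul_add, ← mul_assoc, Finset.mul_sum]
    congr 1
    · ring
    refine Finset.sum_congr rfl fun j hj => ?_
    have hj' := Finset.mem_range.mp hj
    have hpow : (1-z)^(γ-1-j) * (1-z)^(j+1) = (1-z)^γ := by
      rw [← pow_add]; congr 1; omega
    calc (Nat.choose γ j : ℝ) * z * (1-z)^(γ-1-j) * ((1-z)^(j+1) * polyL j z)
        = ((1-z)^(γ-1-j) * (1-z)^(j+1)) * ((Nat.choose γ j : ℝ) * z * polyL j z) := by ring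
      _ = (1-z)^γ * z * ((Nat.choose γ j : ℝ) * polyL j z) := by rw [hpow]; ring
  have hval : (1 * (0:ℝ)^γ + ∑ j ∈ Finset.range γ,
      (Nat.choose γ j : ℝ) * 1 * (0:ℝ)^(γ-1-j) * (Nat.factorial j : ℝ))
      = (Nat.factorial γ : ℝ) := by
    cases γ with
    | zero => simp
    | succ n =>
      rw [Finset.sum_range_succ]
      have h0 : ∑ j ∈ Finset.range n,
          (Nat.choose (n+1) j : ℝ) * 1 * (0:ℝ)^(n+1-1-j) * (Nat.factorial j : ℝ) = 0 := by
        apply Finset.sum_eq_zero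
        intro j hj
        have := Finset.mem_range.mp hj
        rw [zero_pow (by omega)]
        ring
      rw [h0]
      have h1 : n + 1 - 1 - n = 0 := by omega
      rw [h1, zero_pow (Nat.succ_ne_zero n)]
      simp [Nat.choose_succ_self_right, Nat.factorial_succ]
  rw [← hval]
  exact hmain.congr' heq

lemma sq_tendsto : Filter.Tendsto (fun p : ℝ => p ^ 2)
    (nhdsWithin 1 (Set.Ioo (0:ℝ) 1)) (nhdsWithin 1 (Set.Ioo (0:ℝ) 1)) := by
  rw [tendsto_nhdsWithin_iff]
  constructor
  · have hz1 : Filter.Tendsto (fun p : ℝ => p) (nhdsWithin 1 (Set.Ioo (0:ℝ) 1)) (nhds 1) :=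
      Filter.tendsto_id.mono_left nhdsWithin_le_nhds
    simpa using hz1.pow 2
  · filter_upwards [self_mem_nhdsWithin] with p hp
    exact ⟨pow_pos hp.1 2, by nlinarith [hp.1, hp.2]⟩

lemma polyL_tendsto_sq (γ : ℕ) :
    Filter.Tendsto (fun p : ℝ => ((1 - p) * (1 + p)) ^ (γ + 1) * polyL γ (p ^ 2))
    (nhdsWithin 1 (Set.Ioo (0:ℝ) 1)) (nhds (Nat.factorial γ : ℝ)) := by
  have := (polyL_tendsto γ).comp sq_tendsto
  apply this.congr
  intro p
  simp only [Function.comp]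
  congr 2
  ring


/-- The dominant (melonic) part of the coefficient of `t²` in the averaged Sobolev norm. -/
noncomputable def Dmelo (γ : ℕ) (p : ℝ) : ℝ :=
  ((1 - p) / 4) *
      ((p * (p + 3) / (p + 1)) * polyL γ (p ^ 2) + (p ^ 2 / (p + 1) ^ 2 - 2) * polyL γ p) +
    ((1 - p) ^ 2 / 4) *
      ((polyL (γ + 1) p + polyL γ p) / (1 + p) + polyL (γ + 1) (p ^ 2) + polyL γ (p ^ 2))

set_option maxHeartbeats 1000000 in
/-- As `p → 1⁻` (with `p ∈ (0,1)`), `(1-p)^γ · D_γ(p)` tends to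
`(γ!/16)·((5+γ)/2^γ + 2γ - 5)`. -/
theorem stmt10 (γ : ℕ) :
    Filter.Tendsto (fun p : ℝ => (1 - p) ^ γ * Dmelo γ p)
      (nhdsWithin 1 (Set.Ioo 0 1))
      (nhds ((Nat.factorial γ : ℝ) / 16 *
        ((5 + (γ : ℝ)) / (2 : ℝ) ^ γ + 2 * (γ : ℝ) - 5))) := by
  set l := nhdsWithin (1:ℝ) (Set.Ioo (0:ℝ) 1) with hl
  have hz1 : Filter.Tendsto (fun p : ℝ => p) l (nhds 1) :=
    Filter.tendsto_id.mono_left nhdsWithin_le_nhds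
  have h1p : Filter.Tendsto (fun p : ℝ => 1 + p) l (nhds 2) := by
    have := (tendsto_const_nhds (x := (1:ℝ)) (f := l)).add hz1
    norm_num at this; exact this
  have hp1 : Filter.Tendsto (fun p : ℝ => p + 1) l (nhds 2) := by
    have := hz1.add (tendsto_const_nhds (x := (1:ℝ)) (f := l))
    norm_num at this; exact this
  have h1m : Filter.Tendsto (fun p : ℝ => 1 - p) l (nhds 0) := by
    have := (tendsto_const_nhds (x := (1:ℝ)) (f := l)).sub hz1
    norm_num at this; exact this
  have hQ : Filter.Tendsto (fun p : ℝ => (((1:ℝ) + p) ^ (γ + 1))⁻¹) l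
      (nhds (((2:ℝ) ^ (γ + 1))⁻¹)) :=
    (h1p.pow (γ + 1)).inv₀ (by positivity)
  have hA := polyL_tendsto γ
  have hA' := polyL_tendsto (γ + 1)
  have hB := polyL_tendsto_sq γ
  have hB' := polyL_tendsto_sq (γ + 1)
  have hc1 : Filter.Tendsto (fun p : ℝ => p * (p + 3) / (p + 1)) l (nhds 2) := by
    have h3 : Filter.Tendsto (fun p : ℝ => p + 3) l (nhds 4) := by
      have := hz1.add (tendsto_const_nhds (x := (3:ℝ)) (f := l))
      norm_num at this; exact this
    have := (hz1.mul h3).div hp1 two_ne_zero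
    norm_num at this; exact this
  have hc2 : Filter.Tendsto (fun p : ℝ => p ^ 2 / (p + 1) ^ 2 - 2) l (nhds (1/4 - 2)) := by
    have := ((hz1.pow 2).div (hp1.pow 2) (by norm_num)).sub
      (tendsto_const_nhds (x := (2:ℝ)) (f := l))
    norm_num at this
    convert this using 2
    norm_num
  have hG := ((hc1.mul (hB.mul hQ)).add (hc2.mul hA)).div_const (4:ℝ) |>.add
    (((((hA'.add (h1m.mul hA)).div h1p two_ne_zero).add
      ((hB'.mul hQ).div h1p two_ne_zero)).add (h1m.mul (hB.mul hQ))).div_const (4:ℝ))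
  have heq : (fun p : ℝ =>
      (p * (p + 3) / (p + 1) * (((1 - p) * (1 + p)) ^ (γ + 1) * polyL γ (p ^ 2) *
          (((1:ℝ) + p) ^ (γ + 1))⁻¹)
        + (p ^ 2 / (p + 1) ^ 2 - 2) * ((1 - p) ^ (γ + 1) * polyL γ p)) / 4
      + ((((1 - p) ^ (γ + 1 + 1) * polyL (γ + 1) p) + (1 - p) * ((1 - p) ^ (γ + 1) * polyL γ p))
            / (1 + p)
          + ((1 - p) * (1 + p)) ^ (γ + 1 + 1) * polyL (γ + 1) (p ^ 2) *
              (((1:ℝ) + p) ^ (γ + 1))⁻¹ / (1 + p)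
          + (1 - p) * (((1 - p) * (1 + p)) ^ (γ + 1) * polyL γ (p ^ 2) *
              (((1:ℝ) + p) ^ (γ + 1))⁻¹)) / 4)
      =ᶠ[l] (fun p : ℝ => (1 - p) ^ γ * Dmelo γ p) := by
    filter_upwards [self_mem_nhdsWithin] with p hp
    have hne1 : p + 1 ≠ 0 := by have := hp.1; intro h; linarith
    have hne2 : (1:ℝ) + p ≠ 0 := by have := hp.1; intro h; linarith
    have hne3 : ((1:ℝ) + p) ^ (γ + 1) ≠ 0 := pow_ne_zero _ hne2
    have e1 : ((1 - p) * (1 + p)) ^ (γ + 1) * polyL γ (p ^ 2) * (((1:ℝ) + p) ^ (γ + 1))⁻¹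
        = (1 - p) ^ (γ + 1) * polyL γ (p ^ 2) := by
      rw [mul_pow]
      field_simp
    have e2 : ((1 - p) * (1 + p)) ^ (γ + 1 + 1) * polyL (γ + 1) (p ^ 2) *
          (((1:ℝ) + p) ^ (γ + 1))⁻¹
        = (1 - p) ^ (γ + 1 + 1) * (1 + p) * polyL (γ + 1) (p ^ 2) := by
      rw [mul_pow, pow_succ ((1:ℝ) + p) (γ + 1)]
      field_simp
    rw [e1, e2, Dmelo]
    field_simp
    ring
  refine Filter.Tendsto.congr' heq ?_
  convert hG using 2
  · rfl
  have h2γ : ((2:ℝ)) ^ γ ≠ 0 := by positivity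
  rw [Nat.factorial_succ, pow_succ]
  push_cast
  field_simp
  ring
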